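/- Let G be a finite group and F a free group of finite rank, and let ρ be a rational subset of the direct product group G × F. Then for each g ∈ G, the set gρ = {w ∈ F : (g, w) ∈ ρ} is a rational subset of F. -/

import Mathlib

open Pointwise

/-- The rational subsets of a monoid: the smallest collection of subsets containing
all finite subsets and closed under union, elementwise product, and the Kleene star
(the generated submonoid). -/
inductive IsRationalSubset {M : Type*} [Monoid M] : Set M → Prop
  | finite (A : Set M) (hA : A.Finite) : IsRationalSubset A
  | union (A B : Set M) : IsRationalSubset A → IsRationalSubset B → IsRationalSubset (A ∪ B)
  | mul (A B : Set M) : IsRationalSubset A → IsRationalSubset B → IsRationalSubset (A * B)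
  | star (A : Set M) : IsRationalSubset A → IsRationalSubset (Submonoid.closure A : Set M)

section Aux

variable {G M : Type*} [Group G] [Monoid M]

/-- Paths in the "automaton" with states `G`, from `a` to `b`, with intermediate
states in `S`, reading the product `m` of the second components. -/
inductive IsPath (A : Set (G × M)) (S : Set G) : G → G → M → Prop
  | step (a b : G) (m : M) (h : (a⁻¹ * b, m) ∈ A) : IsPath A S a b m
  | cons (a c b : G) (m m' : M) (h : (a⁻¹ * c, m) ∈ A) (hc : c ∈ S)
      (hp : IsPath A S c b m') : IsPath A S a b (m * m')

lemma IsPath.mono {A : Set (G × M)} {S T : Set G} (hST : S ⊆ T) {a b : G} {m : M}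
    (h : IsPath A S a b m) : IsPath A T a b m := by
  induction h with
  | step a b m h => exact .step a b m h
  | cons a c b m m' h hc _ ih => exact .cons a c b m m' h (hST hc) ih

lemma IsPath.append {A : Set (G × M)} {S : Set G} {a c b : G} {m m' : M}
    (hc : c ∈ S) (h1 : IsPath A S a c m) (h2 : IsPath A S c b m') :
    IsPath A S a b (m * m') := by
  induction h1 with
  | step a c m h => exact .cons a c b m m' h hc h2
  | cons a c' c m₁ m₂ h hc' _ ih =>
      rw [mul_assoc]
      exact .cons a c' b m₁ (m₂ * m') h hc' (ih hc h2)

lemma IsPath.append_closure {A : Set (G × M)} {S : Set G} {a c : G} {m u : M}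
    (hc : c ∈ S) (h1 : IsPath A S a c m)
    (hu : u ∈ Submonoid.closure {x | IsPath A S c c x}) :
    IsPath A S a c (m * u) := by
  induction hu using Submonoid.closure_induction generalizing m with
  | mem x hx => exact h1.append hc hx
  | one => simpa using h1
  | mul x y hx hy ihx ihy =>
      rw [← mul_assoc]
      exact ihy (ihx h1)

lemma isPath_insert_iff {A : Set (G × M)} {S : Set G} {c a b : G} {m : M} :
    IsPath A (insert c S) a b m ↔ IsPath A S a b m ∨
      m ∈ {x | IsPath A S a c x} * (Submonoid.closure {x | IsPath A S c c x} : Set M) *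
        {x | IsPath A S c b x} := by
  constructor
  · intro h
    induction h with
    | step a b m h => exact Or.inl (.step a b m h)
    | cons a c' b m m' h hc' hp ih =>
        rcases hc' with rfl | hc'
        · rcases ih with ih | ⟨_, ⟨x, hx, u, hu, rfl⟩, y, hy, rfl⟩
          · exact Or.inr ⟨m * 1, ⟨m, IsPath.step a c' m h, 1, Submonoid.one_mem _, rfl⟩,
              m', ih, by rw [mul_one]⟩
          · refine Or.inr ⟨m * (x * u), ⟨m, IsPath.step a c' m h, x * u,
              Submonoid.mul_mem _ (Submonoid.subset_closure hx) hu, rfl⟩, y, hy, ?_⟩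
            simp [mul_assoc]
        · rcases ih with ih | ⟨_, ⟨x, hx, u, hu, rfl⟩, y, hy, rfl⟩
          · exact Or.inl (.cons a c' b m m' h hc' ih)
          · refine Or.inr ⟨(m * x) * u, ⟨m * x, .cons a c' c m x h hc' hx, u, hu, rfl⟩,
              y, hy, ?_⟩
            simp [mul_assoc]
  · rintro (h | ⟨_, ⟨x, hx, u, hu, rfl⟩, y, hy, rfl⟩)
    · exact h.mono (Set.subset_insert c S)
    · have hcS : c ∈ insert c S := Set.mem_insert c S
      have hx' : IsPath A (insert c S) a c x := hx.mono (Set.subset_insert c S)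
      have hy' : IsPath A (insert c S) c b y := hy.mono (Set.subset_insert c S)
      have hu' : u ∈ Submonoid.closure {z | IsPath A (insert c S) c c z} :=
        Submonoid.closure_mono (fun z hz => hz.mono (Set.subset_insert c S)) hu
      exact (hx'.append_closure hcS hu').append hcS hy'

lemma rat_biUnion {M : Type*} [Monoid M] {ι : Type*} (s : Finset ι) (f : ι → Set M)
    (hf : ∀ i, IsRationalSubset (f i)) : IsRationalSubset (⋃ i ∈ s, f i) := by
  classical
  induction s using Finset.induction with
  | empty => simpa using IsRationalSubset.finite ∅ Set.finite_empty
  | insert _ _ _ ih =>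
      rw [Finset.set_biUnion_insert]
      exact IsRationalSubset.union _ _ (hf _) ih

lemma rat_path [DecidableEq G] {A : Set (G × M)}
    (hA : ∀ g : G, IsRationalSubset {m : M | (g, m) ∈ A}) (s : Finset G) :
    ∀ a b : G, IsRationalSubset {m : M | IsPath A (↑s : Set G) a b m} := by
  induction s using Finset.induction with
  | empty =>
      intro a b
      have : {m : M | IsPath A (↑(∅ : Finset G) : Set G) a b m} = {m | (a⁻¹ * b, m) ∈ A} := by
        ext m
        constructor
        · intro h
          cases h with
          | step _ _ _ h => exact h
          | cons _ c _ _ _ _ hc _ => simp at hc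
        · exact fun h => IsPath.step a b m h
      rw [this]; exact hA _
  | @insert c s _ ih =>
      intro a b
      have : {m : M | IsPath A (↑(insert c s) : Set G) a b m} =
          {m : M | IsPath A (↑s : Set G) a b m} ∪
          {x : M | IsPath A (↑s : Set G) a c x} *
            (Submonoid.closure {x : M | IsPath A (↑s : Set G) c c x} : Set M) *
            {x : M | IsPath A (↑s : Set G) c b x} := by
        ext m
        rw [Finset.coe_insert]
        exact isPath_insert_iff
      rw [this]
      exact IsRationalSubset.union _ _ (ih a b)
        (IsRationalSubset.mul _ _
          (IsRationalSubset.mul _ _ (ih a c) (IsRationalSubset.star _ (ih c c))) (ih c b))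

lemma path_to_closure {A : Set (G × M)} {S : Set G} {a b : G} {m : M}
    (h : IsPath A S a b m) : (a⁻¹ * b, m) ∈ Submonoid.closure A := by
  induction h with
  | step a b m h => exact Submonoid.subset_closure h
  | cons a c b m m' h _ _ ih =>
      have : (a⁻¹ * b, m * m') = (a⁻¹ * c, m) * (c⁻¹ * b, m') := by
        simp [Prod.ext_iff, mul_assoc]
      rw [this]
      exact Submonoid.mul_mem _ (Submonoid.subset_closure h) ih

lemma IsPath.translate {A : Set (G × M)} {a b : G} {m : M} (x : G)
    (h : IsPath A Set.univ a b m) : IsPath A Set.univ (x * a) (x * b) m := by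
  induction h with
  | step a b m h => exact .step _ _ _ (by simpa [mul_assoc] using h)
  | cons a c b m m' h _ _ ih =>
      exact .cons (x * a) (x * c) (x * b) m m' (by simpa [mul_assoc] using h) trivial ih

lemma closure_to_path {A : Set (G × M)} {g : G} {w : M}
    (h : (g, w) ∈ Submonoid.closure A) :
    (g = 1 ∧ w = 1) ∨ IsPath A Set.univ 1 g w := by
  have key : ∀ x : G × M, x ∈ Submonoid.closure A →
      (x = 1 ∨ IsPath A Set.univ 1 x.1 x.2) := by
    intro x hx
    induction hx using Submonoid.closure_induction with
    | mem y hy => exact Or.inr (.step 1 y.1 y.2 (by simpa using hy))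
    | one => exact Or.inl rfl
    | mul y z _ _ ihy ihz =>
        rcases ihy with rfl | ihy
        · simpa using ihz
        · rcases ihz with rfl | ihz
          · simpa using Or.inr ihy
          · right
            have := ihz.translate y.1
            rw [mul_one] at this
            simpa using ihy.append (by trivial) this
  rcases key (g, w) h with h1 | h2
  · exact Or.inl (by simpa [Prod.ext_iff] using h1)
  · exact Or.inr h2

lemma rat_fiber {A : Set (G × M)} (hA : IsRationalSubset A) (g : G) [Finite G] :
    IsRationalSubset {m : M | (g, m) ∈ A} := by
  classical
  have := Fintype.ofFinite G
  induction hA generalizing g with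
  | finite A hA =>
      exact IsRationalSubset.finite _
        ((hA.image Prod.snd).subset (fun m hm => ⟨(g, m), hm, rfl⟩))
  | union A B _ _ ihA ihB =>
      have : {m : M | (g, m) ∈ A ∪ B} = {m | (g, m) ∈ A} ∪ {m | (g, m) ∈ B} := rfl
      rw [this]
      exact IsRationalSubset.union _ _ (ihA g) (ihB g)
  | mul A B _ _ ihA ihB =>
      have : {m : M | (g, m) ∈ A * B} =
          ⋃ h ∈ (Finset.univ : Finset G), {u : M | (h, u) ∈ A} * {v : M | (h⁻¹ * g, v) ∈ B} := by
        ext w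
        simp only [Set.mem_iUnion, Finset.mem_univ, exists_true_left, Set.mem_setOf_eq]
        constructor
        · rintro ⟨x, hx, y, hy, hxy⟩
          refine ⟨x.1, x.2, hx, y.2, ?_, ?_⟩
          · have h1 : x.1 * y.1 = g := congrArg Prod.fst hxy
            have : x.1⁻¹ * g = y.1 := by rw [← h1]; group
            rw [this]; exact hy
          · exact congrArg Prod.snd hxy
        · rintro ⟨h, u, hu, v, hv, huv⟩
          exact ⟨(h, u), hu, (h⁻¹ * g, v), hv, by
            simp [Prod.ext_iff, huv, mul_assoc]⟩
      rw [this]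
      refine rat_biUnion _ _ fun h => IsRationalSubset.mul _ _ (ihA h) (ihB (h⁻¹ * g))
  | star A _ ihA =>
      have : {m : M | (g, m) ∈ (Submonoid.closure A : Set (G × M))} =
          {m : M | g = 1 ∧ m = 1} ∪ {m : M | IsPath A (↑(Finset.univ : Finset G)) 1 g m} := by
        ext w
        simp only [Set.mem_setOf_eq, Set.mem_union, Finset.coe_univ]
        constructor
        · exact fun h => closure_to_path h
        · rintro (⟨rfl, rfl⟩ | h)
          · exact Submonoid.one_mem _
          · simpa using path_to_closure h
      rw [this]
      exact IsRationalSubset.union _ _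
        (IsRationalSubset.finite _ ((Set.finite_singleton 1).subset (fun m hm => hm.2)))
        (rat_path ihA Finset.univ 1 g)

end Aux

theorem stmt11 (G : Type*) [Group G] [Finite G] (n : ℕ)
    (ρ : Set (G × FreeGroup (Fin n))) (hρ : IsRationalSubset ρ) (g : G) :
    IsRationalSubset {w : FreeGroup (Fin n) | (g, w) ∈ ρ} :=
  rat_fiber hρ g
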